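/- For N ≥ 2, let m = Δ_1 + ⋯ + Δ_N be a regular multisegment with b_1 > b_2 > ⋯ > b_N whose associated permutation σ_m avoids the patterns 4231 and 3412. Then m has at least two distinct good segments. -/
import Mathlib

/-- A segment `[a;b]` is a pair of integers `a ≤ b`. -/
structure Segment where
  a : ℤ
  b : ℤ
  le : a ≤ b

namespace Segment

/-- `Δ ≺ Δ'` : the segment `Δ = [a;b]` precedes `Δ' = [c;d]`,
i.e. `a < c`, `c - 1 ≤ b` and `b < d`. -/
def prec (Δ Δ' : Segment) : Prop :=
  Δ.a < Δ'.a ∧ Δ'.a - 1 ≤ Δ.b ∧ Δ.b < Δ'.b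

/-- `←Δ = [a-1; b-1]`. -/
def shift (Δ : Segment) : Segment :=
  ⟨Δ.a - 1, Δ.b - 1, by have := Δ.le; omega⟩

instance (Δ Δ' : Segment) : Decidable (Δ.prec Δ') := by
  unfold prec; infer_instance

end Segment

/-- A multisegment (given as an indexed family of segments) is regular if the beginnings
of its segments are pairwise distinct and the ends of its segments are pairwise distinct. -/
def Regular {ι : Type*} (Δ : ι → Segment) : Prop :=
  (∀ i j : ι, (Δ i).a = (Δ j).a → i = j) ∧ (∀ i j : ι, (Δ i).b = (Δ j).b → i = j)

/-- The condition `LC(Δ₀, m)` : there is an injective function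
`f : X_{Δ₀,m} → Y_{Δ₀,m}` with `Δ_{f i} ≺ Δ_i` for all `i ∈ X_{Δ₀,m}`,
where `X_{Δ₀,m} = {i | Δ₀ ≺ Δ_i}` and `Y_{Δ₀,m} = {i | ←Δ₀ ≺ Δ_i}`. -/
def LC {ι : Type*} (Δ₀ : Segment) (Δ : ι → Segment) : Prop :=
  ∃ f : ι → ι, Set.InjOn f {i | Δ₀.prec (Δ i)} ∧
    ∀ i : ι, Δ₀.prec (Δ i) → Δ₀.shift.prec (Δ (f i)) ∧ (Δ (f i)).prec (Δ i)

/-- The condition `RC(Δ₀, m)` : there is an injective function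
`f : X̃_{Δ₀,m} → Ỹ_{Δ₀,m}` with `Δ_i ≺ Δ_{f i}` for all `i ∈ X̃_{Δ₀,m}`,
where `X̃_{Δ₀,m} = {i | Δ_i ≺ Δ₀}` and `Ỹ_{Δ₀,m} = {i | ←Δ_i ≺ Δ₀}`. -/
def RC {ι : Type*} (Δ₀ : Segment) (Δ : ι → Segment) : Prop :=
  ∃ f : ι → ι, Set.InjOn f {i | (Δ i).prec Δ₀} ∧
    ∀ i : ι, (Δ i).prec Δ₀ → (Δ (f i)).shift.prec Δ₀ ∧ (Δ i).prec (Δ (f i))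

/-- `Δ_{i₀}` is a good left segment of the multisegment `m` given by the family `Δ` :
`LC(Δ_{i₀}, m)`, `RC(Δ_{i₀}, m)` and `LC(Δ_{i₀}, m∖Δ_{i₀})` all hold. -/
def GoodLeft {ι : Type*} (Δ : ι → Segment) (i₀ : ι) : Prop :=
  LC (Δ i₀) Δ ∧ RC (Δ i₀) Δ ∧ LC (Δ i₀) (fun i : {i : ι // i ≠ i₀} => Δ i.val)

/-- `Δ_{i₀}` is a good right segment of the multisegment `m` given by the family `Δ` :
`LC(Δ_{i₀}, m)`, `RC(Δ_{i₀}, m)` and `RC(Δ_{i₀}, m∖Δ_{i₀})` all hold. -/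
def GoodRight {ι : Type*} (Δ : ι → Segment) (i₀ : ι) : Prop :=
  LC (Δ i₀) Δ ∧ RC (Δ i₀) Δ ∧ RC (Δ i₀) (fun i : {i : ι // i ≠ i₀} => Δ i.val)

/-- A good segment is one which is good left or good right. -/
def Good {ι : Type*} (Δ : ι → Segment) (i₀ : ι) : Prop :=
  GoodLeft Δ i₀ ∨ GoodRight Δ i₀

/-- `σ ∈ S_N` contains the pattern `τ ∈ S_k` : there are indices `i_1 < ⋯ < i_k` with
`σ(i_s) < σ(i_t) ↔ τ(s) < τ(t)` for all `s, t`. -/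
def ContainsPattern {N k : ℕ} (σ : Equiv.Perm (Fin N)) (τ : Equiv.Perm (Fin k)) : Prop :=
  ∃ g : Fin k ↪o Fin N, ∀ s t : Fin k, σ (g s) < σ (g t) ↔ τ s < τ t

/-- `σ` avoids the pattern `τ`. -/
def Avoids {N k : ℕ} (σ : Equiv.Perm (Fin N)) (τ : Equiv.Perm (Fin k)) : Prop :=
  ¬ ContainsPattern σ τ

/-- The pattern `4231` (in one-line notation), as a permutation of `Fin 4`. -/
def perm4231 : Equiv.Perm (Fin 4) := Equiv.swap 0 3

/-- The pattern `3412` (in one-line notation), as a permutation of `Fin 4`. -/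
def perm3412 : Equiv.Perm (Fin 4) := Equiv.swap 0 2 * Equiv.swap 1 3
section Aux

variable {N : ℕ}

lemma Segment.shift_a (s : Segment) : s.shift.a = s.a - 1 := rfl
lemma Segment.shift_b (s : Segment) : s.shift.b = s.b - 1 := rfl

/-- A prefix-record whose later-smaller values are decreasing is a good left segment. -/
lemma goodLeft_of (Δ : Fin N → Segment)
    (hb : ∀ i j : Fin N, i < j → (Δ j).b < (Δ i).b)
    (u : Fin N)
    (hrec : ∀ i : Fin N, i < u → (Δ i).a < (Δ u).a)
    (hnoA : ∀ s t : Fin N, u < s → s < t → (Δ t).a < (Δ u).a → (Δ t).a < (Δ s).a) :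
    GoodLeft Δ u := by
  classical
  have hX : ∀ i : Fin N, ¬ (Δ u).prec (Δ i) := by
    intro i hi
    rcases lt_trichotomy i u with h | h | h
    · exact absurd hi.1 (not_lt.2 (le_of_lt (hrec i h)))
    · subst h; exact lt_irrefl _ hi.2.2
    · exact absurd hi.2.2 (not_lt.2 (le_of_lt (hb u i h)))
  have hui : ∀ i : Fin N, (Δ i).prec (Δ u) → u < i := by
    intro i hi
    rcases lt_trichotomy u i with h | h | h
    · exact h
    · subst h; exact absurd hi.2.2 (lt_irrefl _)
    · exact absurd hi.2.2 (not_lt.2 (le_of_lt (hb i u h)))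
  set T : Fin N → Finset (Fin N) :=
    fun i => Finset.univ.filter (fun j => (j = u ∨ (Δ j).prec (Δ u)) ∧ j < i) with hT
  have hTmem : ∀ i j : Fin N, j ∈ T i ↔ ((j = u ∨ (Δ j).prec (Δ u)) ∧ j < i) := by
    intro i j; simp [hT]
  have hTne : ∀ i : Fin N, (Δ i).prec (Δ u) → (T i).Nonempty :=
    fun i hi => ⟨u, (hTmem i u).2 ⟨Or.inl rfl, hui i hi⟩⟩
  set f : Fin N → Fin N := fun i => if h : (T i).Nonempty then (T i).max' h else i with hf
  have hfeq : ∀ i : Fin N, (h : (T i).Nonempty) → f i = (T i).max' h := by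
    intro i h; simp only [hf]; rw [dif_pos h]
  have hfmem : ∀ i : Fin N, (Δ i).prec (Δ u) → f i ∈ T i := by
    intro i hi
    rw [hfeq i (hTne i hi)]
    exact Finset.max'_mem _ _
  have key : ∀ i : Fin N, (Δ i).prec (Δ u) →
      ((Δ (f i)).shift.prec (Δ u) ∧ (Δ i).prec (Δ (f i))) := by
    intro i hi
    obtain ⟨hj, hji⟩ := (hTmem i (f i)).1 (hfmem i hi)
    have hbji : (Δ i).b < (Δ (f i)).b := hb (f i) i hji
    obtain ⟨hi1, hi2, hi3⟩ := hi
    simp only [Segment.prec, Segment.shift_a, Segment.shift_b]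
    rcases hj with hju | hjp
    · have hle := (Δ u).le
      rw [hju]
      rw [hju] at hbji
      exact ⟨⟨by omega, by omega, by omega⟩, by omega, by omega, by omega⟩
    · have huj : u < f i := hui _ hjp
      have haij : (Δ i).a < (Δ (f i)).a := hnoA (f i) i huj hji hi1
      obtain ⟨h1, h2, h3⟩ := hjp
      exact ⟨⟨by omega, by omega, by omega⟩, by omega, by omega, by omega⟩
  have hmono : ∀ i1 i2 : Fin N, (Δ i1).prec (Δ u) → (Δ i2).prec (Δ u) → i1 < i2 →
      f i1 < f i2 := by
    intro i1 i2 h1 h2 h12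
    have hfi1 : f i1 < i1 := ((hTmem i1 (f i1)).1 (hfmem i1 h1)).2
    have hmem : i1 ∈ T i2 := (hTmem i2 i1).2 ⟨Or.inr h1, h12⟩
    have : i1 ≤ f i2 := by
      rw [hfeq i2 (hTne i2 h2)]
      exact Finset.le_max' _ _ hmem
    exact lt_of_lt_of_le hfi1 this
  refine ⟨⟨id, Set.injOn_id _, fun i hi => absurd hi (hX i)⟩,
    ⟨f, ?_, key⟩,
    ⟨id, Set.injOn_id _, fun i hi => absurd hi (hX i.1)⟩⟩
  intro i1 h1 i2 h2 heq
  by_contra hne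
  rcases lt_or_gt_of_ne hne with h | h
  · exact absurd heq (ne_of_lt (hmono i1 i2 h1 h2 h))
  · exact absurd heq.symm (ne_of_lt (hmono i2 i1 h2 h1 h))

/-- A suffix-min whose earlier-larger values are decreasing is a good right segment. -/
lemma goodRight_of (Δ : Fin N → Segment)
    (hb : ∀ i j : Fin N, i < j → (Δ j).b < (Δ i).b)
    (u : Fin N)
    (hsm : ∀ i : Fin N, u < i → (Δ u).a < (Δ i).a)
    (hnoB : ∀ s t : Fin N, s < t → t < u → (Δ u).a < (Δ s).a → (Δ t).a < (Δ s).a) :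
    GoodRight Δ u := by
  classical
  have hX : ∀ i : Fin N, ¬ (Δ i).prec (Δ u) := by
    intro i hi
    rcases lt_trichotomy i u with h | h | h
    · exact absurd hi.2.2 (not_lt.2 (le_of_lt (hb i u h)))
    · subst h; exact lt_irrefl _ hi.2.2
    · exact absurd hi.1 (not_lt.2 (le_of_lt (hsm i h)))
  have hiu : ∀ i : Fin N, (Δ u).prec (Δ i) → i < u := by
    intro i hi
    rcases lt_trichotomy i u with h | h | h
    · exact h
    · subst h; exact absurd hi.2.2 (lt_irrefl _)
    · exact absurd hi.2.2 (not_lt.2 (le_of_lt (hb u i h)))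
  set T : Fin N → Finset (Fin N) :=
    fun i => Finset.univ.filter (fun j => (j = u ∨ (Δ u).prec (Δ j)) ∧ i < j) with hT
  have hTmem : ∀ i j : Fin N, j ∈ T i ↔ ((j = u ∨ (Δ u).prec (Δ j)) ∧ i < j) := by
    intro i j; simp [hT]
  have hTne : ∀ i : Fin N, (Δ u).prec (Δ i) → (T i).Nonempty :=
    fun i hi => ⟨u, (hTmem i u).2 ⟨Or.inl rfl, hiu i hi⟩⟩
  set f : Fin N → Fin N := fun i => if h : (T i).Nonempty then (T i).min' h else i with hf
  have hfeq : ∀ i : Fin N, (h : (T i).Nonempty) → f i = (T i).min' h := by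
    intro i h; simp only [hf]; rw [dif_pos h]
  have hfmem : ∀ i : Fin N, (Δ u).prec (Δ i) → f i ∈ T i := by
    intro i hi
    rw [hfeq i (hTne i hi)]
    exact Finset.min'_mem _ _
  have key : ∀ i : Fin N, (Δ u).prec (Δ i) →
      ((Δ u).shift.prec (Δ (f i)) ∧ (Δ (f i)).prec (Δ i)) := by
    intro i hi
    obtain ⟨hj, hij⟩ := (hTmem i (f i)).1 (hfmem i hi)
    have hbij : (Δ (f i)).b < (Δ i).b := hb i (f i) hij
    obtain ⟨hi1, hi2, hi3⟩ := hi
    simp only [Segment.prec, Segment.shift_a, Segment.shift_b]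
    rcases hj with hju | hjp
    · have hle := (Δ u).le
      rw [hju]
      rw [hju] at hbij
      exact ⟨⟨by omega, by omega, by omega⟩, by omega, by omega, by omega⟩
    · have hju : f i < u := hiu _ hjp
      have haji : (Δ (f i)).a < (Δ i).a := hnoB i (f i) hij hju hi1
      obtain ⟨h1, h2, h3⟩ := hjp
      have hbju : (Δ u).b < (Δ (f i)).b := hb (f i) u hju
      exact ⟨⟨by omega, by omega, by omega⟩, by omega, by omega, by omega⟩
  have hmono : ∀ i1 i2 : Fin N, (Δ u).prec (Δ i1) → (Δ u).prec (Δ i2) → i1 < i2 →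
      f i1 < f i2 := by
    intro i1 i2 h1 h2 h12
    have hfi2 : i2 < f i2 := ((hTmem i2 (f i2)).1 (hfmem i2 h2)).2
    have hmem : i2 ∈ T i1 := (hTmem i1 i2).2 ⟨Or.inr h2, h12⟩
    have : f i1 ≤ i2 := by
      rw [hfeq i1 (hTne i1 h1)]
      exact Finset.min'_le _ _ hmem
    exact lt_of_le_of_lt this hfi2
  refine ⟨⟨f, ?_, key⟩,
    ⟨id, Set.injOn_id _, fun i hi => absurd hi (hX i)⟩,
    ⟨id, Set.injOn_id _, fun i hi => absurd hi (hX i.1)⟩⟩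
  intro i1 h1 i2 h2 heq
  by_contra hne
  rcases lt_or_gt_of_ne hne with h | h
  · exact absurd heq (ne_of_lt (hmono i1 i2 h1 h2 h))
  · exact absurd heq.symm (ne_of_lt (hmono i2 i1 h2 h1 h))

end Aux

def quad {α : Type*} (a b c d : α) : Fin 4 → α :=
  fun s => if s.val = 0 then a else if s.val = 1 then b else if s.val = 2 then c else d

lemma quad_strictMono {N : ℕ} {k0 k1 k2 k3 : Fin N}
    (h01 : k0 < k1) (h12 : k1 < k2) (h23 : k2 < k3) :
    StrictMono (quad k0 k1 k2 k3) := by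
  intro s t hst
  fin_cases s <;> fin_cases t <;> simp only [quad] <;> norm_num <;>
    first
      | exact h01
      | exact h12
      | exact h23
      | exact h01.trans h12
      | exact h12.trans h23
      | exact (h01.trans h12).trans h23
      | exact absurd hst (by decide)

lemma contains_of_quad {N : ℕ} (σ : Equiv.Perm (Fin N)) (τ : Equiv.Perm (Fin 4))
    (k0 k1 k2 k3 : Fin N) (h01 : k0 < k1) (h12 : k1 < k2) (h23 : k2 < k3)
    (hcmp : ∀ s t : Fin 4, σ (quad k0 k1 k2 k3 s) < σ (quad k0 k1 k2 k3 t) ↔ τ s < τ t) :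
    ContainsPattern σ τ :=
  ⟨OrderEmbedding.ofStrictMono _ (quad_strictMono h01 h12 h23), hcmp⟩

theorem statement8 {N : ℕ} (hN : 2 ≤ N) (Δ : Fin N → Segment) (hreg : Regular Δ)
    (hb : ∀ i j : Fin N, i < j → (Δ j).b < (Δ i).b)
    (σ : Equiv.Perm (Fin N))
    (hσ : ∀ i j : Fin N, i < j → (Δ (σ i)).a < (Δ (σ j)).a)
    (hav1 : Avoids σ perm4231) (hav2 : Avoids σ perm3412) :
    ∃ i j : Fin N, i ≠ j ∧ Good Δ i ∧ Good Δ j := by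
  classical
  have hainj : ∀ i j : Fin N, (Δ i).a = (Δ j).a → i = j := hreg.1
  -- strict comparison from distinctness
  have hlt : ∀ {i j : Fin N}, i ≠ j → ¬ (Δ i).a < (Δ j).a → (Δ j).a < (Δ i).a := by
    intro i j hne h
    rcases lt_trichotomy ((Δ i).a) ((Δ j).a) with h' | h' | h'
    · exact absurd h' h
    · exact absurd (hainj i j h') hne
    · exact h'
  -- rank comparison
  have hrank : ∀ x y : Fin N, (Δ x).a < (Δ y).a → σ.symm x < σ.symm y := by
    intro x y hxy
    rcases lt_trichotomy (σ.symm x) (σ.symm y) with h | h | h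
    · exact h
    · have : x = y := by
        have := congrArg σ h
        simpa using this
      subst this; exact absurd hxy (lt_irrefl _)
    · have := hσ _ _ h
      simp only [Equiv.apply_symm_apply] at this
      exact absurd hxy (not_lt.2 (le_of_lt this))
  have H4231 : ∀ p1 p2 p3 p4 : Fin N, p1 < p2 → p2 < p3 → p3 < p4 →
      (Δ p4).a < (Δ p2).a → (Δ p2).a < (Δ p3).a → (Δ p3).a < (Δ p1).a → False := by
    intro p1 p2 p3 p4 h12 h23 h34 ha1 ha2 ha3
    apply hav1
    refine contains_of_quad σ perm4231 (σ.symm p4) (σ.symm p2) (σ.symm p3) (σ.symm p1)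
      (hrank _ _ ha1) (hrank _ _ ha2) (hrank _ _ ha3) ?_
    intro s t
    fin_cases s <;> fin_cases t <;>
      simp only [quad, Equiv.apply_symm_apply] <;> norm_num
    · exact iff_of_false (asymm (h23.trans h34)) (by decide)
    · exact iff_of_false (asymm h34) (by decide)
    · exact iff_of_false (asymm ((h12.trans h23).trans h34)) (by decide)
    · exact iff_of_true (h23.trans h34) (by decide)
    · exact iff_of_true h23 (by decide)
    · exact iff_of_false (asymm h12) (by decide)
    · exact iff_of_true h34 (by decide)
    · exact iff_of_false (asymm h23) (by decide)
    · exact iff_of_false (asymm (h12.trans h23)) (by decide)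
    · exact iff_of_true ((h12.trans h23).trans h34) (by decide)
    · exact iff_of_true h12 (by decide)
    · exact iff_of_true (h12.trans h23) (by decide)
  have H3412 : ∀ p1 p2 p3 p4 : Fin N, p1 < p2 → p2 < p3 → p3 < p4 →
      (Δ p3).a < (Δ p4).a → (Δ p4).a < (Δ p1).a → (Δ p1).a < (Δ p2).a → False := by
    intro p1 p2 p3 p4 h12 h23 h34 ha1 ha2 ha3
    apply hav2
    refine contains_of_quad σ perm3412 (σ.symm p3) (σ.symm p4) (σ.symm p1) (σ.symm p2)
      (hrank _ _ ha1) (hrank _ _ ha2) (hrank _ _ ha3) ?_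
    intro s t
    fin_cases s <;> fin_cases t <;>
      simp only [quad, Equiv.apply_symm_apply] <;> norm_num
    · exact iff_of_true h34 (by decide)
    · exact iff_of_false (asymm (h12.trans h23)) (by decide)
    · exact iff_of_false (asymm h23) (by decide)
    · exact iff_of_false (asymm h34) (by decide)
    · exact iff_of_false (asymm ((h12.trans h23).trans h34)) (by decide)
    · exact iff_of_false (asymm (h23.trans h34)) (by decide)
    · exact iff_of_true (h12.trans h23) (by decide)
    · exact iff_of_true ((h12.trans h23).trans h34) (by decide)
    · exact iff_of_true h12 (by decide)
    · exact iff_of_true h23 (by decide)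
    · exact iff_of_true (h23.trans h34) (by decide)
    · exact iff_of_false (asymm h12) (by decide)
  -- extremal positions
  haveI : Nonempty (Fin N) := ⟨⟨0, by omega⟩⟩
  obtain ⟨p, hp⟩ := Finite.exists_max (fun i : Fin N => (Δ i).a)
  obtain ⟨q, hq⟩ := Finite.exists_min (fun i : Fin N => (Δ i).a)
  set z : Fin N := ⟨N - 1, by omega⟩ with hz
  set w : Fin N := ⟨0, by omega⟩ with hw
  have hzle : ∀ i : Fin N, i ≤ z := by
    intro i
    have := i.isLt
    simp only [hz, Fin.le_def]
    omega
  have hwle : ∀ i : Fin N, w ≤ i := by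
    intro i
    simp only [hw, Fin.le_def]
    omega
  have hwz : w ≠ z := by
    simp only [hw, hz, Ne, Fin.ext_iff]
    omega
  -- strict max/min
  have hpmax : ∀ i : Fin N, i ≠ p → (Δ i).a < (Δ p).a :=
    fun i hne => lt_of_le_of_ne (hp i) (fun h => hne (hainj i p h))
  have hqmin : ∀ i : Fin N, i ≠ q → (Δ q).a < (Δ i).a :=
    fun i hne => lt_of_le_of_ne (hq i) (fun h => hne (hainj q i h).symm)
  -- M1 : if there is an ascent above the last value, everything after the max is decreasing
  have hdecOf : (∃ i j : Fin N, i < j ∧ (Δ z).a < (Δ i).a ∧ (Δ i).a < (Δ j).a) →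
      ∀ s t : Fin N, p < s → s < t → (Δ t).a < (Δ s).a := by
    rintro ⟨i, j, hij, hzi, haij⟩ s t hps hst
    have hjz : j < z := by
      refine lt_of_le_of_ne (hzle j) (fun h => ?_)
      rw [h] at haij
      exact absurd (hzi.trans haij) (lt_irrefl _)
    have hip : i ≠ p := fun h => by
      rw [h] at haij
      exact absurd (lt_of_lt_of_le haij (hp j)) (lt_irrefl _)
    by_contra hcon
    have hst' : (Δ s).a < (Δ t).a := hlt (ne_of_lt hst).symm hcon
    have hsz : s < z := lt_of_le_of_ne (hzle s)
      (fun h => by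
        have : t ≤ z := hzle t
        rw [h] at hst
        exact absurd (lt_of_lt_of_le hst this) (lt_irrefl _))
    rcases lt_trichotomy ((Δ s).a) ((Δ z).a) with h | h | h
    · rcases lt_or_gt_of_ne hip with h' | h'
      · exact H3412 i p s z h' hps hsz h hzi (hpmax i hip)
      · have hjq : j ≠ p := fun e => absurd (h'.trans hij) (e ▸ lt_irrefl p)
        exact H4231 p i j z h' hij hjz hzi haij (hpmax j hjq)
    · exact absurd (hainj s z h) (ne_of_lt hsz)
    · have htz : t < z := lt_of_le_of_ne (hzle t)
        (fun e => by
          rw [e] at hst'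
          exact absurd (h.trans hst') (lt_irrefl _))
      have htp : t ≠ p := fun e => absurd (hps.trans hst) (e ▸ lt_irrefl p)
      exact H4231 p s t z hps hst htz h hst' (hpmax t htp)
  -- M1' : if there is an ascent below the first value, everything before the min is decreasing
  have hdecOf' : (∃ i j : Fin N, i < j ∧ (Δ i).a < (Δ j).a ∧ (Δ j).a < (Δ w).a) →
      ∀ s t : Fin N, s < t → t < q → (Δ t).a < (Δ s).a := by
    rintro ⟨i, j, hij, haij, hjw⟩ s t hst htq
    have hjq : j ≠ q := by
      intro e
      rw [e] at hij haij
      exact absurd haij (not_lt.2 (le_of_lt (hqmin i (ne_of_lt hij))))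
    have hiw : w < i := lt_of_le_of_ne (hwle i)
      (fun e => absurd (haij.trans hjw) (e ▸ lt_irrefl _))
    by_contra hcon
    have hst' : (Δ s).a < (Δ t).a := hlt (ne_of_lt hst).symm hcon
    have hwt : w < t := lt_of_le_of_lt (hwle s) hst
    have hsq : s ≠ q := ne_of_lt (hst.trans htq)
    rcases lt_trichotomy ((Δ t).a) ((Δ w).a) with h | h | h
    · have hws : w < s := lt_of_le_of_ne (hwle s)
        (fun e => absurd (hst'.trans h) (e ▸ lt_irrefl _))
      exact H4231 w s t q hws hst htq (hqmin s hsq) hst' h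
    · exact absurd (hainj t w h) (ne_of_gt hwt)
    · rcases lt_or_gt_of_ne hjq with h' | h'
      · exact H4231 w i j q hiw hij h' (hqmin i (ne_of_lt (hij.trans h'))) haij hjw
      · exact H3412 w t q j hwt htq h' (hqmin j hjq) hjw h
  by_cases hAsc : ∃ i j : Fin N, i < j ∧ (Δ z).a < (Δ i).a ∧ (Δ i).a < (Δ j).a
  · -- the max is a good left segment
    have hdec := hdecOf hAsc
    have hglp : GoodLeft Δ p :=
      goodLeft_of Δ hb p (fun i hi => hpmax i (ne_of_lt hi))
        (fun s t hps hst _ => hdec s t hps hst)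
    by_cases hAsc' : ∃ i j : Fin N, i < j ∧ (Δ i).a < (Δ j).a ∧ (Δ j).a < (Δ w).a
    · -- the min is a good right segment
      have hdec' := hdecOf' hAsc'
      have hgrq : GoodRight Δ q :=
        goodRight_of Δ hb q (fun i hi => hqmin i (ne_of_gt hi))
          (fun s t hst htq _ => hdec' s t hst htq)
      have hpq : p ≠ q := by
        intro e
        have h1 : ∀ i : Fin N, (Δ i).a = (Δ p).a :=
          fun i => le_antisymm (hp i) (e ▸ hq i)
        exact hwz ((hainj w p (h1 w)).trans (hainj z p (h1 z)).symm)
      exact ⟨p, q, hpq, Or.inl hglp, Or.inr hgrq⟩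
    · -- the first segment is a good left segment
      have hglw : GoodLeft Δ w :=
        goodLeft_of Δ hb w (fun i hi => absurd hi (not_lt.2 (hwle i)))
          (fun s t hws hst hta => by
            by_contra hcon
            have : (Δ s).a < (Δ t).a := hlt (ne_of_lt hst).symm hcon
            exact hAsc' ⟨s, t, hst, this, hta⟩)
      have hpw : p ≠ w := by
        intro e
        obtain ⟨i, j, hij, hzi, haij⟩ := hAsc
        have hjw : w < j := lt_of_le_of_lt (hwle i) hij
        have hjp : j ≠ p := e ▸ (ne_of_gt hjw)
        exact hAsc' ⟨i, j, hij, haij, e ▸ hpmax j hjp⟩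
      exact ⟨p, w, hpw, Or.inl hglp, Or.inl hglw⟩
  · -- the last segment is a good right segment
    have hgrz : GoodRight Δ z :=
      goodRight_of Δ hb z (fun i hi => absurd hi (not_lt.2 (hzle i)))
        (fun s t hst htz hzs => by
          by_contra hcon
          have : (Δ s).a < (Δ t).a := hlt (ne_of_lt hst).symm hcon
          exact hAsc ⟨s, t, hst, hzs, this⟩)
    by_cases hAsc' : ∃ i j : Fin N, i < j ∧ (Δ i).a < (Δ j).a ∧ (Δ j).a < (Δ w).a
    · have hdec' := hdecOf' hAsc'
      have hgrq : GoodRight Δ q :=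
        goodRight_of Δ hb q (fun i hi => hqmin i (ne_of_gt hi))
          (fun s t hst htq _ => hdec' s t hst htq)
      have hqz : q ≠ z := by
        intro e
        obtain ⟨i, j, hij, haij, hjw⟩ := hAsc'
        have hjq : j ≠ q := by
          intro e'
          rw [e'] at hij haij
          exact absurd haij (not_lt.2 (le_of_lt (hqmin i (ne_of_lt hij))))
        have hjz : j < z := lt_of_le_of_ne (hzle j) (by rw [← e]; exact hjq)
        have hiq : i ≠ q := by rw [e]; exact ne_of_lt (hij.trans hjz)
        refine hAsc ⟨i, j, hij, ?_, haij⟩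
        rw [← e]
        exact hqmin i hiq
      exact ⟨q, z, hqz, Or.inr hgrq, Or.inr hgrz⟩
    · have hglw : GoodLeft Δ w :=
        goodLeft_of Δ hb w (fun i hi => absurd hi (not_lt.2 (hwle i)))
          (fun s t hws hst hta => by
            by_contra hcon
            have : (Δ s).a < (Δ t).a := hlt (ne_of_lt hst).symm hcon
            exact hAsc' ⟨s, t, hst, this, hta⟩)
      exact ⟨w, z, hwz, Or.inl hglw, Or.inr hgrz⟩
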